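/- Let K be a complex Hilbert space, P and Q orthogonal projections on K, and θ ∈ ℝ with cos θ ≠ 0. Then the map (ξ₊, ξ₋) ↦ ξ₋ is a linear bijection from the subspace ker P(θ,P) ∩ (ran P × ran Q) of K ⊕ K onto ran P ∩ ran Q, with inverse ξ₋ ↦ (tanθ·ξ₋, ξ₋). In particular the dimension of ker P(θ,P) ∩ (ran P × ran Q) is independent of θ as long as cos θ ≠ 0. -/

import Mathlib

noncomputable section

open ContinuousLinearMap

variable {K : Type*} [NormedAddCommGroup K] [InnerProductSpace ℂ K]

/-- The Hilbert direct sum `K ⊕ K`, identified with `K × K` as a set. -/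
def prodE (K : Type*) [NormedAddCommGroup K] [InnerProductSpace ℂ K] :
    WithLp 2 (K × K) ≃L[ℂ] K × K :=
  WithLp.prodContinuousLinearEquiv 2 ℂ K K

/-- Transport an operator on `K × K` to the Hilbert direct sum `K ⊕ K`. -/
def toSum {K : Type*} [NormedAddCommGroup K] [InnerProductSpace ℂ K]
    (f : K × K →L[ℂ] K × K) : WithLp 2 (K × K) →L[ℂ] WithLp 2 (K × K) :=
  ((prodE K).symm : K × K →L[ℂ] WithLp 2 (K × K)) ∘L f ∘L
    ((prodE K) : WithLp 2 (K × K) →L[ℂ] K × K)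

/-- The operator on `K ⊕ K` with block matrix `[[A, B],[C, D]]`. -/
def blockOp {K : Type*} [NormedAddCommGroup K] [InnerProductSpace ℂ K]
    (A B C D : K →L[ℂ] K) : WithLp 2 (K × K) →L[ℂ] WithLp 2 (K × K) :=
  toSum ((A.coprod B).prod (C.coprod D))

/-- The family `P(θ,P)` on `K ⊕ K`, with block matrix
`[[cos²θ·P + sin²θ·(I-P), -cosθ·sinθ·I],[-cosθ·sinθ·I, cos²θ·(I-P) + sin²θ·P]]`. -/
def Ptheta {K : Type*} [NormedAddCommGroup K] [InnerProductSpace ℂ K]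
    (θ : ℝ) (P : K →L[ℂ] K) : WithLp 2 (K × K) →L[ℂ] WithLp 2 (K × K) :=
  blockOp
    (((Real.cos θ : ℂ) ^ 2) • P + ((Real.sin θ : ℂ) ^ 2) • (1 - P))
    (-(((Real.cos θ : ℂ) * (Real.sin θ : ℂ)) • (1 : K →L[ℂ] K)))
    (-(((Real.cos θ : ℂ) * (Real.sin θ : ℂ)) • (1 : K →L[ℂ] K)))
    (((Real.cos θ : ℂ) ^ 2) • (1 - P) + ((Real.sin θ : ℂ) ^ 2) • P)

/-- The subspace `ker P(θ,P) ∩ (ran P × ran Q)` of `K ⊕ K`. -/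
def kerCap {K : Type*} [NormedAddCommGroup K] [InnerProductSpace ℂ K]
    (θ : ℝ) (P Q : K →L[ℂ] K) : Submodule ℂ (WithLp 2 (K × K)) :=
  LinearMap.ker (Ptheta θ P : WithLp 2 (K × K) →ₗ[ℂ] WithLp 2 (K × K)) ⊓
    Submodule.comap (((prodE K) : WithLp 2 (K × K) →L[ℂ] K × K) : WithLp 2 (K × K) →ₗ[ℂ] K × K)
      ((LinearMap.range (P : K →ₗ[ℂ] K)).prod (LinearMap.range (Q : K →ₗ[ℂ] K)))

private lemma mem_range_iff_fix (P : K →L[ℂ] K) (hP : P ∘L P = P) (a : K) :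
    a ∈ LinearMap.range (P : K →ₗ[ℂ] K) ↔ P a = a := by
  constructor
  · rintro ⟨y, rfl⟩
    have := congrArg (fun T : K →L[ℂ] K => T y) hP
    simpa using this
  · intro h; exact ⟨a, h⟩

private lemma Ptheta_apply_eq (θ : ℝ) (P : K →L[ℂ] K) (x : WithLp 2 (K × K)) :
    Ptheta θ P x = (prodE K).symm
      (((Real.cos θ : ℂ) ^ 2) • P ((prodE K x).1)
        + ((Real.sin θ : ℂ) ^ 2) • ((prodE K x).1 - P ((prodE K x).1))
        - ((Real.cos θ : ℂ) * (Real.sin θ : ℂ)) • (prodE K x).2,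
      ((Real.cos θ : ℂ) ^ 2) • ((prodE K x).2 - P ((prodE K x).2))
        + ((Real.sin θ : ℂ) ^ 2) • P ((prodE K x).2)
        - ((Real.cos θ : ℂ) * (Real.sin θ : ℂ)) • (prodE K x).1) := by
  simp [Ptheta, blockOp, toSum, prodE, sub_eq_add_neg]
  abel

private lemma mem_kerCap_iff_raw (θ : ℝ) (P Q : K →L[ℂ] K) (x : WithLp 2 (K × K)) :
    x ∈ kerCap θ P Q ↔
      (((Real.cos θ : ℂ) ^ 2) • P ((prodE K x).1)
          + ((Real.sin θ : ℂ) ^ 2) • ((prodE K x).1 - P ((prodE K x).1))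
          - ((Real.cos θ : ℂ) * (Real.sin θ : ℂ)) • (prodE K x).2 = 0 ∧
        ((Real.cos θ : ℂ) ^ 2) • ((prodE K x).2 - P ((prodE K x).2))
          + ((Real.sin θ : ℂ) ^ 2) • P ((prodE K x).2)
          - ((Real.cos θ : ℂ) * (Real.sin θ : ℂ)) • (prodE K x).1 = 0) ∧
      ((prodE K x).1 ∈ LinearMap.range (P : K →ₗ[ℂ] K) ∧ (prodE K x).2 ∈ LinearMap.range (Q : K →ₗ[ℂ] K)) := by
  rw [kerCap, Submodule.mem_inf, LinearMap.mem_ker, ContinuousLinearMap.coe_coe, Ptheta_apply_eq]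
  rw [show ((0 : WithLp 2 (K × K)) = (prodE K).symm 0) by simp]
  rw [(prodE K).symm.injective.eq_iff, Prod.mk_eq_zero]
  rfl

private lemma tan_cast (θ : ℝ) :
    (Real.tan θ : ℂ) = (Real.sin θ : ℂ) / (Real.cos θ : ℂ) := by
  rw [Real.tan_eq_sin_div_cos]; push_cast; ring

/-- The clean characterization of membership in `kerCap` when `cos θ ≠ 0`. -/
private lemma mem_kerCap_iff_clean (θ : ℝ) (hc : Real.cos θ ≠ 0) (P Q : K →L[ℂ] K)
    (hPidem : P ∘L P = P) (hQidem : Q ∘L Q = Q) (x : WithLp 2 (K × K)) :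
    x ∈ kerCap θ P Q ↔
      ((prodE K x).2 ∈ LinearMap.range (P : K →ₗ[ℂ] K) ⊓ LinearMap.range (Q : K →ₗ[ℂ] K) ∧
        (prodE K x).1 = (Real.tan θ : ℂ) • (prodE K x).2) := by
  rw [mem_kerCap_iff_raw, Submodule.mem_inf, tan_cast]
  set a := ((prodE K) x).1 with hadef
  set b := ((prodE K) x).2 with hbdef
  set c : ℂ := (Real.cos θ : ℂ) with hcdef
  set s : ℂ := (Real.sin θ : ℂ) with hsdef
  have hc' : c ≠ 0 := Complex.ofReal_ne_zero.mpr hc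
  constructor
  · rintro ⟨⟨e1, e2⟩, hRa, hRb⟩
    have ha : P a = a := (mem_range_iff_fix P hPidem a).1 hRa
    rw [ha, sub_self, smul_zero, add_zero, sub_eq_zero] at e1
    -- e1 : c ^ 2 • a = (c * s) • b
    have haeq : a = (s / c) • b := by
      have h := congrArg (fun v : K => (c ^ 2)⁻¹ • v) e1
      simp only [smul_smul] at h
      rw [inv_mul_cancel₀ (pow_ne_zero 2 hc'), one_smul] at h
      rw [h, show (c ^ 2)⁻¹ * (c * s) = s / c by field_simp]
    have hPb : P b = b := by
      by_cases hs : s = 0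
      · have ha0 : a = 0 := by
          have : c ^ 2 • a = 0 := by rw [e1, hs, mul_zero, zero_smul]
          simpa [pow_ne_zero 2 hc'] using this
        rw [ha0, smul_zero, sub_zero, hs] at e2
        simp only [zero_pow, zero_smul, add_zero, ne_eq, OfNat.ofNat_ne_zero,
          not_false_eq_true] at e2
        have := smul_right_injective K (pow_ne_zero 2 hc') (by rw [e2, smul_zero] : c ^ 2 • (b - P b) = c ^ 2 • (0 : K))
        rwa [sub_eq_zero, eq_comm] at this
      · have h1 : (c * s) • b = (c * s) • P b := by
          have := congrArg P e1
          rw [map_smul, ha, map_smul, e1] at this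
          exact this
        exact (smul_right_injective K (mul_ne_zero hc' hs) h1).symm
    exact ⟨⟨(mem_range_iff_fix P hPidem b).2 hPb, hRb⟩, haeq⟩
  · rintro ⟨⟨hRPb, hRQb⟩, haeq⟩
    have hPb : P b = b := (mem_range_iff_fix P hPidem b).1 hRPb
    have hPa : P a = a := by rw [haeq, map_smul, hPb]
    refine ⟨⟨?_, ?_⟩, ⟨a, hPa⟩, hRQb⟩
    · rw [hPa, sub_self, smul_zero, add_zero, haeq, smul_smul]
      rw [show c ^ 2 * (s / c) = c * s by field_simp, sub_self]
    · rw [hPb, sub_self, smul_zero, zero_add, haeq, smul_smul]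
      rw [show c * s * (s / c) = s ^ 2 by field_simp, sub_self]

/-- For `cos θ ≠ 0`, the map `(ξ₊, ξ₋) ↦ ξ₋` is a linear bijection
from `ker P(θ,P) ∩ (ran P × ran Q)` onto `ran P ∩ ran Q`, with inverse
`ξ₋ ↦ (tanθ·ξ₋, ξ₋)`; in particular the dimension of `ker P(θ,P) ∩ (ran P × ran Q)`
is independent of `θ` as long as `cos θ ≠ 0`. -/
theorem statement9 [CompleteSpace K] (P Q : K →L[ℂ] K)
    (hPsa : IsSelfAdjoint P) (hPidem : P ∘L P = P)
    (hQsa : IsSelfAdjoint Q) (hQidem : Q ∘L Q = Q) :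
    (∀ θ : ℝ, Real.cos θ ≠ 0 →
      Set.BijOn (fun x : WithLp 2 (K × K) => ((prodE K) x).2)
        ((kerCap θ P Q : Submodule ℂ (WithLp 2 (K × K))) : Set (WithLp 2 (K × K)))
        ((LinearMap.range (P : K →ₗ[ℂ] K) ⊓ LinearMap.range (Q : K →ₗ[ℂ] K) : Submodule ℂ K) : Set K) ∧
      (∀ ξ : K, ξ ∈ LinearMap.range (P : K →ₗ[ℂ] K) ⊓ LinearMap.range (Q : K →ₗ[ℂ] K) →
        (prodE K).symm ((Real.tan θ : ℂ) • ξ, ξ) ∈ kerCap θ P Q ∧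
        ((prodE K) ((prodE K).symm ((Real.tan θ : ℂ) • ξ, ξ))).2 = ξ) ∧
      (∀ x ∈ kerCap θ P Q,
        (prodE K).symm ((Real.tan θ : ℂ) • ((prodE K) x).2, ((prodE K) x).2) = x)) ∧
    (∀ θ₁ θ₂ : ℝ, Real.cos θ₁ ≠ 0 → Real.cos θ₂ ≠ 0 →
      Module.rank ℂ (kerCap θ₁ P Q) = Module.rank ℂ (kerCap θ₂ P Q)) := by
  have main : ∀ θ : ℝ, Real.cos θ ≠ 0 →
      (∀ ξ : K, ξ ∈ LinearMap.range (P : K →ₗ[ℂ] K) ⊓ LinearMap.range (Q : K →ₗ[ℂ] K) →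
        (prodE K).symm ((Real.tan θ : ℂ) • ξ, ξ) ∈ kerCap θ P Q ∧
        ((prodE K) ((prodE K).symm ((Real.tan θ : ℂ) • ξ, ξ))).2 = ξ) ∧
      (∀ x ∈ kerCap θ P Q,
        (prodE K).symm ((Real.tan θ : ℂ) • ((prodE K) x).2, ((prodE K) x).2) = x) := by
    intro θ hc
    constructor
    · intro ξ hξ
      constructor
      · rw [mem_kerCap_iff_clean θ hc P Q hPidem hQidem]
        constructor
        · simpa [prodE] using hξ
        · simp [prodE]
      · simp [prodE]
    · intro x hx
      have h := (mem_kerCap_iff_clean θ hc P Q hPidem hQidem x).1 hx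
      rw [ContinuousLinearEquiv.symm_apply_eq]
      exact Prod.ext h.2.symm rfl
  constructor
  · intro θ hc
    obtain ⟨h2, h3⟩ := main θ hc
    refine ⟨?_, h2, h3⟩
    have mapsTo1 : Set.MapsTo (fun x : WithLp 2 (K × K) => ((prodE K) x).2)
        ((kerCap θ P Q : Submodule ℂ (WithLp 2 (K × K))) : Set (WithLp 2 (K × K)))
        ((LinearMap.range (P : K →ₗ[ℂ] K) ⊓ LinearMap.range (Q : K →ₗ[ℂ] K) : Submodule ℂ K) : Set K) := by
      intro x hx
      exact ((mem_kerCap_iff_clean θ hc P Q hPidem hQidem x).1 hx).1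
    have mapsTo2 : Set.MapsTo (fun ξ : K => (prodE K).symm ((Real.tan θ : ℂ) • ξ, ξ))
        ((LinearMap.range (P : K →ₗ[ℂ] K) ⊓ LinearMap.range (Q : K →ₗ[ℂ] K) : Submodule ℂ K) : Set K)
        ((kerCap θ P Q : Submodule ℂ (WithLp 2 (K × K))) : Set (WithLp 2 (K × K))) := by
      intro ξ hξ
      exact (h2 ξ hξ).1
    exact Set.InvOn.bijOn ⟨fun x hx => h3 x hx, fun ξ hξ => (h2 ξ hξ).2⟩ mapsTo1 mapsTo2
  · intro θ₁ θ₂ hc1 hc2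
    have mkEquiv : ∀ θ : ℝ, Real.cos θ ≠ 0 →
        Nonempty ((kerCap θ P Q) ≃ₗ[ℂ]
          (LinearMap.range (P : K →ₗ[ℂ] K) ⊓ LinearMap.range (Q : K →ₗ[ℂ] K) : Submodule ℂ K)) := by
      intro θ hc
      obtain ⟨h2, h3⟩ := main θ hc
      exact ⟨{
        toFun := fun x => ⟨((prodE K) x.1).2,
          ((mem_kerCap_iff_clean θ hc P Q hPidem hQidem x.1).1 x.2).1⟩
        map_add' := fun x y => by ext; simp [prodE]
        map_smul' := fun r x => by ext; simp [prodE]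
        invFun := fun ξ => ⟨(prodE K).symm ((Real.tan θ : ℂ) • ξ.1, ξ.1), (h2 ξ.1 ξ.2).1⟩
        left_inv := fun x => Subtype.ext (h3 x.1 x.2)
        right_inv := fun ξ => Subtype.ext (h2 ξ.1 ξ.2).2 }⟩
    obtain ⟨e1⟩ := mkEquiv θ₁ hc1
    obtain ⟨e2⟩ := mkEquiv θ₂ hc2
    exact e1.rank_eq.trans e2.rank_eq.symm
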